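/- Let (X, μ_X) and (Y, μ_Y) be probability spaces, with a probability measure μ on X × Y extending the product measure and satisfying Fubini for a measurable set E ⊆ X × Y. Suppose A ⊆ X and B ⊆ Y are measurable sets of positive measure that are both perfect for E, meaning: for μ_Y-almost every y, μ_X(A ∩ E_y) ∈ {0, μ_X(A)}, and for μ_X-almost every x, μ_Y(B ∩ E_x) ∈ {0, μ_Y(B)}. Then μ(E ∩ (A × B)) / (μ_X(A)·μ_Y(B)) ∈ {0, 1}. -/

import Mathlib

open Set MeasureTheory
open scoped ENNReal

/-- If `A ⊆ X` and `B ⊆ Y` are measurable sets of positive measure, both perfect for a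
measurable relation `E ⊆ X × Y`, then the density of `E` on `A × B` is exactly `0` or `1`. -/
theorem density_zero_one_on_perfect_sets
    {X Y : Type*} [MeasurableSpace X] [MeasurableSpace Y]
    (μX : Measure X) (μY : Measure Y) (μ : Measure (X × Y))
    [IsProbabilityMeasure μX] [IsProbabilityMeasure μY] [IsProbabilityMeasure μ]
    (hProd : ∀ (s : Set X) (t : Set Y), MeasurableSet s → MeasurableSet t →
      μ (s ×ˢ t) = μX s * μY t)
    (hFubY : ∀ S : Set (X × Y), MeasurableSet S →
      μ S = ∫⁻ y, μX {x | (x, y) ∈ S} ∂μY)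
    (hFubX : ∀ S : Set (X × Y), MeasurableSet S →
      μ S = ∫⁻ x, μY {y | (x, y) ∈ S} ∂μX)
    (E : Set (X × Y)) (hE : MeasurableSet E)
    (A : Set X) (B : Set Y) (hA : MeasurableSet A) (hB : MeasurableSet B)
    (hA0 : 0 < μX A) (hB0 : 0 < μY B)
    (hAperf : ∀ᵐ y ∂μY,
      μX (A ∩ {x | (x, y) ∈ E}) = 0 ∨ μX (A ∩ {x | (x, y) ∈ E}) = μX A)
    (hBperf : ∀ᵐ x ∂μX,
      μY (B ∩ {y | (x, y) ∈ E}) = 0 ∨ μY (B ∩ {y | (x, y) ∈ E}) = μY B) :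
    μ (E ∩ A ×ˢ B) / (μX A * μY B) ∈ ({0, 1} : Set ℝ≥0∞) := by
  classical
  -- measurability of the slice functions
  have hfmeas : Measurable fun y => μX (A ∩ {x | (x, y) ∈ E}) := by
    have h : ∀ y, A ∩ {x | (x, y) ∈ E} = (fun x => (x, y)) ⁻¹' ((A ×ˢ univ) ∩ E) := by
      intro y; ext x; simp [and_comm]
    simp_rw [h]
    exact measurable_measure_prodMk_right ((hA.prod MeasurableSet.univ).inter hE)
  have hgmeas : Measurable fun x => μY (B ∩ {y | (x, y) ∈ E}) := by
    have h : ∀ x, B ∩ {y | (x, y) ∈ E} = Prod.mk x ⁻¹' ((univ ×ˢ B) ∩ E) := by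
      intro x; ext y; simp [and_comm]
    simp_rw [h]
    exact measurable_measure_prodMk_left ((MeasurableSet.univ.prod hB).inter hE)
  set T : Set Y := B ∩ {y | μX (A ∩ {x | (x, y) ∈ E}) = μX A} with hTdef
  have hT : MeasurableSet T := hB.inter (hfmeas (measurableSet_singleton (μX A)))
  set S : Set X := A ∩ {x | μY (B ∩ {y | (x, y) ∈ E}) = μY B} with hSdef
  have hS : MeasurableSet S := hA.inter (hgmeas (measurableSet_singleton (μY B)))
  have hTsubB : T ⊆ B := inter_subset_left
  -- key1 : μ (E ∩ A ×ˢ B) = μX A * μY T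
  have key1 : μ (E ∩ A ×ˢ B) = μX A * μY T := by
    rw [hFubY _ (hE.inter (hA.prod hB))]
    have h1 : (fun y => μX {x | (x, y) ∈ E ∩ A ×ˢ B})
        = B.indicator (fun y => μX (A ∩ {x | (x, y) ∈ E})) := by
      funext y
      by_cases hy : y ∈ B
      · rw [indicator_of_mem hy]; congr 1; ext x; simp [hy, and_comm]
      · rw [indicator_of_notMem hy]
        have : {x | (x, y) ∈ E ∩ A ×ˢ B} = ∅ := by ext x; simp [hy]
        rw [this, measure_empty]
    rw [h1, lintegral_indicator hB]
    have h2 : ∫⁻ y in B, μX (A ∩ {x | (x, y) ∈ E}) ∂μY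
        = ∫⁻ y in B, (μX A) * T.indicator 1 y ∂μY := by
      refine lintegral_congr_ae ?_
      filter_upwards [ae_restrict_of_ae hAperf, ae_restrict_mem hB] with y hy hyB
      rcases hy with h | h
      · have hyT : y ∉ T := fun hyT => hA0.ne' (hyT.2.symm.trans h)
        simp [h, indicator_of_notMem hyT]
      · have hyT : y ∈ T := ⟨hyB, h⟩
        simp [h, indicator_of_mem hyT]
    rw [h2, lintegral_const_mul _ (measurable_one.indicator hT)]
    congr 1
    rw [lintegral_indicator hT]
    simp [Measure.restrict_restrict hT, inter_eq_self_of_subset_left hTsubB]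
  -- key2 : μ (E ∩ A ×ˢ B) = μY B * μX S
  have key2 : μ (E ∩ A ×ˢ B) = μY B * μX S := by
    rw [hFubX _ (hE.inter (hA.prod hB))]
    have h1 : (fun x => μY {y | (x, y) ∈ E ∩ A ×ˢ B})
        = A.indicator (fun x => μY (B ∩ {y | (x, y) ∈ E})) := by
      funext x
      by_cases hx : x ∈ A
      · rw [indicator_of_mem hx]; congr 1; ext y; simp [hx, and_comm]
      · rw [indicator_of_notMem hx]
        have : {y | (x, y) ∈ E ∩ A ×ˢ B} = ∅ := by ext y; simp [hx]
        rw [this, measure_empty]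
    rw [h1, lintegral_indicator hA]
    have h2 : ∫⁻ x in A, μY (B ∩ {y | (x, y) ∈ E}) ∂μX
        = ∫⁻ x in A, (μY B) * S.indicator 1 x ∂μX := by
      refine lintegral_congr_ae ?_
      filter_upwards [ae_restrict_of_ae hBperf, ae_restrict_mem hA] with x hx hxA
      rcases hx with h | h
      · have hxS : x ∉ S := fun hxS => hB0.ne' (hxS.2.symm.trans h)
        simp [h, indicator_of_notMem hxS]
      · have hxS : x ∈ S := ⟨hxA, h⟩
        simp [h, indicator_of_mem hxS]
    rw [h2, lintegral_const_mul _ (measurable_one.indicator hS)]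
    congr 1
    rw [lintegral_indicator hS]
    simp [Measure.restrict_apply hS, inter_eq_self_of_subset_left (inter_subset_left : S ⊆ A)]
    exact congrArg μX (inter_eq_self_of_subset_left inter_subset_left)
  -- key3 : μ (E ∩ A ×ˢ T) = μX A * μY T
  have key3 : μ (E ∩ A ×ˢ T) = μX A * μY T := by
    rw [hFubY _ (hE.inter (hA.prod hT))]
    have h1 : (fun y => μX {x | (x, y) ∈ E ∩ A ×ˢ T})
        = T.indicator (fun _ => μX A) := by
      funext y
      by_cases hy : y ∈ T
      · rw [indicator_of_mem hy]
        have : {x | (x, y) ∈ E ∩ A ×ˢ T} = A ∩ {x | (x, y) ∈ E} := by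
          ext x; simp [hy, and_comm]
        rw [this, hy.2]
      · rw [indicator_of_notMem hy]
        have : {x | (x, y) ∈ E ∩ A ×ˢ T} = ∅ := by ext x; simp [hy]
        rw [this, measure_empty]
    rw [h1, lintegral_indicator hT, setLIntegral_const]
  -- key4 : μ (E ∩ A ×ˢ T) = μX S * μY T
  have key4 : μ (E ∩ A ×ˢ T) = μX S * μY T := by
    rw [hFubX _ (hE.inter (hA.prod hT))]
    have h1 : (fun x => μY {y | (x, y) ∈ E ∩ A ×ˢ T})
        = A.indicator (fun x => μY (T ∩ {y | (x, y) ∈ E})) := by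
      funext x
      by_cases hx : x ∈ A
      · rw [indicator_of_mem hx]; congr 1; ext y; simp [hx, and_comm]
      · rw [indicator_of_notMem hx]
        have : {y | (x, y) ∈ E ∩ A ×ˢ T} = ∅ := by ext y; simp [hx]
        rw [this, measure_empty]
    rw [h1, lintegral_indicator hA]
    have h2 : ∫⁻ x in A, μY (T ∩ {y | (x, y) ∈ E}) ∂μX
        = ∫⁻ x in A, (μY T) * S.indicator 1 x ∂μX := by
      refine lintegral_congr_ae ?_
      filter_upwards [ae_restrict_of_ae hBperf, ae_restrict_mem hA] with x hx hxA
      have hEx : MeasurableSet {y | (x, y) ∈ E} := measurable_prodMk_left hE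
      rcases hx with h | h
      · have hxS : x ∉ S := fun hxS => hB0.ne' (hxS.2.symm.trans h)
        have h0 : μY (T ∩ {y | (x, y) ∈ E}) = 0 :=
          le_antisymm (le_trans (measure_mono (inter_subset_inter_left _ hTsubB)) h.le)
            (zero_le)
        simp [h0, indicator_of_notMem hxS]
      · have hxS : x ∈ S := ⟨hxA, h⟩
        have hdiff : μY (B \ {y | (x, y) ∈ E}) = 0 := by
          have hBE : B \ {y | (x, y) ∈ E} = B \ (B ∩ {y | (x, y) ∈ E}) := by
            ext y; simp only [mem_diff, mem_inter_iff]; tauto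
          rw [hBE, measure_diff inter_subset_left (hB.inter hEx).nullMeasurableSet
            (measure_ne_top _ _), h, tsub_self]
        have hTE : μY (T ∩ {y | (x, y) ∈ E}) = μY T := by
          refine le_antisymm (measure_mono inter_subset_left) ?_
          calc μY T ≤ μY (T ∩ {y | (x, y) ∈ E}) + μY (T \ {y | (x, y) ∈ E}) :=
                measure_le_inter_add_diff _ _ _
            _ = μY (T ∩ {y | (x, y) ∈ E}) := by
                have : μY (T \ {y | (x, y) ∈ E}) = 0 :=
                  le_antisymm (le_trans (measure_mono (diff_subset_diff_left hTsubB)) hdiff.le)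
                    (zero_le)
                rw [this, add_zero]
        simp [hTE, indicator_of_mem hxS]
    rw [h2, lintegral_const_mul _ (measurable_one.indicator hS)]
    rw [lintegral_indicator hS]
    simp [Measure.restrict_apply hS, inter_eq_self_of_subset_left (inter_subset_left : S ⊆ A),
      mul_comm]
    exact congrArg (μY T * μX ·) (inter_eq_self_of_subset_left inter_subset_left)
  -- conclude
  by_cases hm : μ (E ∩ A ×ˢ B) = 0
  · left; simp [hm]
  · right
    have hT0 : μY T ≠ 0 := by
      intro h0
      exact hm (by rw [key1, h0, mul_zero])
    have hSA : μX S = μX A := by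
      exact ((ENNReal.mul_left_inj hT0 (measure_ne_top _ _)).mp
        (key3.symm.trans key4)).symm
    have : μ (E ∩ A ×ˢ B) = μX A * μY B := by
      rw [key2, hSA, mul_comm]
    rw [this]
    exact ENNReal.div_self (mul_ne_zero hA0.ne' hB0.ne') (ENNReal.mul_ne_top (measure_ne_top _ _) (measure_ne_top _ _))
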